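/- Let S = (−r_s, r_s) ⊂ ℝ with r_s > 0, let λ : S → ℝ be continuous, bounded and even with λ(0) ≠ 0, let α < 1/2 and μ, β > 0, and define R(t) = ∫_S (λ(p)/|p|^{2α}) e^{−μ|p|^{2β} t} dp for t > 0. Set γ = (1−2α)/(2β). Then lim_{t→∞} t^γ R(t) = λ(0) ∫_ℝ e^{−μ|p|^{2β}} |p|^{−2α} dp, and in particular t^γ R(t) converges to a finite nonzero constant. -/

import Mathlib

open MeasureTheory Filter Topology

lemma aux_intOn {α μ β : ℝ} (hα : α < 1 / 2) (hμ : 0 < μ) (hβ : 0 < β) :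
    IntegrableOn (fun q : ℝ => Real.exp (-μ * |q| ^ (2 * β)) / |q| ^ (2 * α))
      (Set.Ioi 0) := by
  have h2β : (0:ℝ) < 2 * β := by linarith
  set s : ℝ := (1 - 2 * α) / (2 * β) - 1 with hs_def
  have hs : -1 < s := by
    have : 0 < (1 - 2 * α) / (2 * β) := div_pos (by linarith) h2β
    simp only [hs_def]; linarith
  have base : IntegrableOn (fun y : ℝ => y ^ s * Real.exp (-μ * y)) (Set.Ioi 0) := by
    have := integrableOn_rpow_mul_exp_neg_mul_rpow (p := 1) hs one_pos hμ
    simpa using this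
  have h1 := (integrableOn_Ioi_comp_rpow_iff'
      (fun y : ℝ => y ^ s * Real.exp (-μ * y)) h2β.ne').2 base
  refine h1.congr_fun (fun x hx => ?_) measurableSet_Ioi
  have hx0 : (0:ℝ) < x := hx
  have e1 : (x ^ (2 * β)) ^ s = x ^ (2 * β * s) := (Real.rpow_mul hx0.le _ _).symm
  have e2 : x ^ (2 * β - 1) * x ^ (2 * β * s) = x ^ (2 * β - 1 + 2 * β * s) :=
    (Real.rpow_add hx0 _ _).symm
  have e3 : 2 * β - 1 + 2 * β * s = -(2 * α) := by
    simp only [hs_def]; field_simp; ring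
  simp only [smul_eq_mul, abs_of_pos hx0, div_eq_mul_inv]
  rw [e1, ← mul_assoc, e2, e3, Real.rpow_neg hx0.le]
  ring

lemma aux_int {α μ β : ℝ} (hα : α < 1 / 2) (hμ : 0 < μ) (hβ : 0 < β) :
    Integrable (fun q : ℝ => Real.exp (-μ * |q| ^ (2 * β)) / |q| ^ (2 * α)) := by
  set w : ℝ → ℝ := fun q => Real.exp (-μ * |q| ^ (2 * β)) / |q| ^ (2 * α) with hw_def
  have hIoi : IntegrableOn w (Set.Ioi 0) := aux_intOn hα hμ hβ
  have hIio : IntegrableOn w (Set.Iio 0) := by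
    have hrm : volume.restrict (Set.Iio (0:ℝ)) =
        Measure.map Neg.neg (volume.restrict (Set.Ioi (0:ℝ))) := by
      rw [← Measure.map_neg_eq_self (volume : Measure ℝ),
        Measure.restrict_map measurable_neg measurableSet_Iio]
      congr 1
      ext x
      simp
    have hemb : MeasurableEmbedding (Neg.neg : ℝ → ℝ) :=
      (Homeomorph.neg ℝ).measurableEmbedding
    rw [IntegrableOn, hrm, hemb.integrable_map_iff]
    have : (w ∘ Neg.neg) = w := by
      funext x; simp only [hw_def, Function.comp_apply, abs_neg]
    rwa [this]
  have : IntegrableOn w ({(0:ℝ)}ᶜ) := by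
    rw [← Set.Iio_union_Ioi]
    exact hIio.union hIoi
  rwa [IntegrableOn, MeasureTheory.restrict_compl_singleton] at this

/-- For `S = (−r_s, r_s)`, `λ` continuous bounded even with `λ(0) ≠ 0`,
`α < 1/2`, `μ, β > 0`, and `R(t) = ∫_S (λ(p)/|p|^{2α}) e^{−μ|p|^{2β} t} dp`,
with `γ = (1−2α)/(2β)` one has `t^γ R(t) → λ(0) ∫_ℝ e^{−μ|p|^{2β}} |p|^{−2α} dp` as
`t → ∞`, and this limit is a finite nonzero constant. -/
theorem stmt_12 (rs : ℝ) (hrs : 0 < rs)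
    (lam : ℝ → ℝ) (hlamCont : ContinuousOn lam (Set.Ioo (-rs) rs))
    (hlamBdd : ∃ M, ∀ p ∈ Set.Ioo (-rs) rs, |lam p| ≤ M)
    (hlamEven : ∀ p ∈ Set.Ioo (-rs) rs, lam (-p) = lam p)
    (hlam0 : lam 0 ≠ 0)
    (α μ β : ℝ) (hα : α < 1 / 2) (hμ : 0 < μ) (hβ : 0 < β) :
    Tendsto (fun t : ℝ =>
        t ^ ((1 - 2 * α) / (2 * β)) *
          ∫ p in Set.Ioo (-rs) rs, (lam p / |p| ^ (2 * α)) * Real.exp (-μ * |p| ^ (2 * β) * t))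
      atTop
      (𝓝 (lam 0 * ∫ p : ℝ, Real.exp (-μ * |p| ^ (2 * β)) / |p| ^ (2 * α))) ∧
    lam 0 * (∫ p : ℝ, Real.exp (-μ * |p| ^ (2 * β)) / |p| ^ (2 * α)) ≠ 0 := by
  obtain ⟨M, hM⟩ := hlamBdd
  have h2β : (0:ℝ) < 2 * β := by linarith
  set δ : ℝ := 1 / (2 * β) with hδ_def
  have hδ : (0:ℝ) < δ := by rw [hδ_def]; positivity
  set γ : ℝ := (1 - 2 * α) / (2 * β) with hγ_def
  set w : ℝ → ℝ := fun q => Real.exp (-μ * |q| ^ (2 * β)) / |q| ^ (2 * α) with hw_def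
  have hw : Integrable w := aux_int hα hμ hβ
  have hw_nonneg : ∀ q, 0 ≤ w q := fun q =>
    div_nonneg (Real.exp_pos _).le (Real.rpow_nonneg (abs_nonneg q) _)
  have h0mem : (0:ℝ) ∈ Set.Ioo (-rs) rs := ⟨by linarith, hrs⟩
  have hM0 : 0 ≤ M := (abs_nonneg _).trans (hM 0 h0mem)
  set F : ℝ → ℝ → ℝ := fun t q =>
    (Set.Ioo (-(rs * t ^ δ)) (rs * t ^ δ)).indicator
      (fun q => lam ((t ^ δ)⁻¹ * q) * w q) q with hF_def
  have hmem : ∀ {d : ℝ}, 0 < d → ∀ q : ℝ,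
      (d⁻¹ * q ∈ Set.Ioo (-rs) rs ↔ q ∈ Set.Ioo (-(rs * d)) (rs * d)) := by
    intro d hd q
    have hd' : (0:ℝ) < d⁻¹ := inv_pos.2 hd
    have hdd : d * d⁻¹ = 1 := mul_inv_cancel₀ hd.ne'
    simp only [Set.mem_Ioo]
    constructor
    · rintro ⟨h1, h2⟩
      constructor <;> nlinarith
    · rintro ⟨h1, h2⟩
      constructor <;> nlinarith
  have h0 : ∀ᵐ q : ℝ, q ≠ 0 := by
    rw [ae_iff]
    simp
  -- key scaling identity
  have key : ∀ t : ℝ, 0 < t →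
      t ^ γ * (∫ p in Set.Ioo (-rs) rs,
          (lam p / |p| ^ (2 * α)) * Real.exp (-μ * |p| ^ (2 * β) * t)) = ∫ q, F t q := by
    intro t ht
    set d : ℝ := t ^ δ with hd_def
    have hd : 0 < d := Real.rpow_pos_of_pos ht δ
    have hdinv : d⁻¹ = t ^ (-δ) := by
      rw [hd_def, ← Real.rpow_neg ht.le]
    rw [← integral_indicator measurableSet_Ioo]
    have e2 := MeasureTheory.Measure.integral_comp_inv_mul_left
      ((Set.Ioo (-rs) rs).indicator fun p =>
        lam p / |p| ^ (2 * α) * Real.exp (-μ * |p| ^ (2 * β) * t)) d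
    rw [abs_of_pos hd, smul_eq_mul] at e2
    have e3 : (∫ y, (Set.Ioo (-rs) rs).indicator (fun p =>
          lam p / |p| ^ (2 * α) * Real.exp (-μ * |p| ^ (2 * β) * t)) y)
        = d⁻¹ * ∫ x, (Set.Ioo (-rs) rs).indicator (fun p =>
          lam p / |p| ^ (2 * α) * Real.exp (-μ * |p| ^ (2 * β) * t)) (d⁻¹ * x) := by
      rw [e2, ← mul_assoc, inv_mul_cancel₀ hd.ne', one_mul]
    rw [e3, ← mul_assoc, ← integral_const_mul]
    refine integral_congr_ae (h0.mono fun q hq => ?_)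
    simp only [hF_def]
    by_cases hqm : q ∈ Set.Ioo (-(rs * d)) (rs * d)
    · rw [Set.indicator_of_mem hqm, Set.indicator_of_mem ((hmem hd q).2 hqm)]
      simp only [hw_def]
      have hq' : (0:ℝ) < |q| := abs_pos.2 hq
      have fa : |d⁻¹ * q| = d⁻¹ * |q| := by
        rw [abs_mul, abs_of_pos (inv_pos.2 hd)]
      have fb : (d⁻¹ * |q|) ^ (2 * α) = d⁻¹ ^ (2 * α) * |q| ^ (2 * α) :=
        Real.mul_rpow (inv_pos.2 hd).le (abs_nonneg q)
      have fc : (d⁻¹ * |q|) ^ (2 * β) = d⁻¹ ^ (2 * β) * |q| ^ (2 * β) :=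
        Real.mul_rpow (inv_pos.2 hd).le (abs_nonneg q)
      have h2β' : (2:ℝ) * β ≠ 0 := h2β.ne'
      have fd : d⁻¹ ^ (2 * β) * t = 1 := by
        rw [hdinv, ← Real.rpow_mul ht.le]
        have he : -δ * (2 * β) = -1 := by rw [hδ_def]; field_simp
        rw [he, Real.rpow_neg_one, inv_mul_cancel₀ ht.ne']
      have fexp : -μ * (d⁻¹ ^ (2 * β) * |q| ^ (2 * β)) * t = -μ * |q| ^ (2 * β) := by
        linear_combination (-μ * |q| ^ (2 * β)) * fd
      have fe : t ^ γ * d⁻¹ * (d⁻¹ ^ (2 * α))⁻¹ = 1 := by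
        rw [hdinv, ← Real.rpow_mul ht.le, ← Real.rpow_neg ht.le, ← Real.rpow_add ht,
          ← Real.rpow_add ht]
        have he : γ + -δ + -(-δ * (2 * α)) = 0 := by
          rw [hγ_def, hδ_def]; field_simp; ring
        rw [he, Real.rpow_zero]
      rw [fa, fb, fc, fexp]
      have hC : |q| ^ (2 * α) ≠ 0 := (Real.rpow_pos_of_pos hq' _).ne'
      have hB : d⁻¹ ^ (2 * α) ≠ 0 := (Real.rpow_pos_of_pos (inv_pos.2 hd) _).ne'
      rw [div_eq_mul_inv, div_eq_mul_inv, mul_inv]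
      linear_combination (lam (d⁻¹ * q) * (|q| ^ (2 * α))⁻¹ *
        Real.exp (-μ * |q| ^ (2 * β))) * fe
    · rw [Set.indicator_of_notMem hqm,
        Set.indicator_of_notMem (fun h => hqm ((hmem hd q).1 h)), mul_zero]
  -- measurability
  have hmeas : ∀ᶠ t : ℝ in atTop, AEStronglyMeasurable (F t) volume := by
    filter_upwards [eventually_gt_atTop (0:ℝ)] with t ht
    have hd : 0 < t ^ δ := Real.rpow_pos_of_pos ht δ
    simp only [hF_def]
    refine (aestronglyMeasurable_indicator_iff measurableSet_Ioo).2 ?_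
    refine AEStronglyMeasurable.mul ?_ hw.1.restrict
    refine (ContinuousOn.comp hlamCont
      ((continuous_mul_left ((t ^ δ)⁻¹)).continuousOn) fun q hq => (hmem hd q).2 hq
      ).aestronglyMeasurable measurableSet_Ioo
  -- bound
  have hbound : ∀ᶠ t : ℝ in atTop, ∀ᵐ q : ℝ, ‖F t q‖ ≤ M * w q := by
    filter_upwards [eventually_gt_atTop (0:ℝ)] with t ht
    have hd : 0 < t ^ δ := Real.rpow_pos_of_pos ht δ
    refine Eventually.of_forall fun q => ?_
    simp only [hF_def]
    by_cases hqm : q ∈ Set.Ioo (-(rs * t ^ δ)) (rs * t ^ δ)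
    · rw [Set.indicator_of_mem hqm]
      have h1 : |lam ((t ^ δ)⁻¹ * q)| ≤ M := hM _ ((hmem hd q).2 hqm)
      rw [Real.norm_eq_abs, abs_mul, abs_of_nonneg (hw_nonneg q)]
      exact mul_le_mul_of_nonneg_right h1 (hw_nonneg q)
    · rw [Set.indicator_of_notMem hqm]
      simpa using mul_nonneg hM0 (hw_nonneg q)
  -- pointwise limit
  have hlim : ∀ᵐ q : ℝ, Tendsto (fun t => F t q) atTop (𝓝 (lam 0 * w q)) := by
    refine h0.mono fun q hq => ?_
    have htail : ∀ᶠ t : ℝ in atTop, q ∈ Set.Ioo (-(rs * t ^ δ)) (rs * t ^ δ) := by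
      have h1 : Tendsto (fun t : ℝ => rs * t ^ δ) atTop atTop :=
        (tendsto_rpow_atTop hδ).const_mul_atTop hrs
      filter_upwards [h1.eventually_gt_atTop |q|] with t ht
      exact Set.mem_Ioo.2 (abs_lt.1 ht)
    have hlamtend : Tendsto (fun t : ℝ => lam ((t ^ δ)⁻¹ * q)) atTop (𝓝 (lam 0)) := by
      have h2 : Tendsto (fun t : ℝ => (t ^ δ)⁻¹ * q) atTop (𝓝 0) := by
        have h3 := (tendsto_rpow_atTop hδ).inv_tendsto_atTop
        simpa using h3.mul_const q
      have hc : ContinuousAt lam 0 := hlamCont.continuousAt (Ioo_mem_nhds (by linarith) hrs)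
      exact hc.tendsto.comp h2
    refine Tendsto.congr' ?_ (hlamtend.mul_const (w q))
    filter_upwards [htail] with t ht
    simp only [hF_def]
    exact (Set.indicator_of_mem ht (fun q => lam ((t ^ δ)⁻¹ * q) * w q)).symm
  have main : Tendsto (fun t : ℝ => ∫ q, F t q) atTop (𝓝 (lam 0 * ∫ q, w q)) := by
    have := tendsto_integral_filter_of_dominated_convergence (fun q => M * w q)
      hmeas hbound (hw.const_mul M) hlim
    rwa [integral_const_mul] at this
  have hwpos : 0 < ∫ q, w q := by
    refine (integral_pos_iff_support_of_nonneg hw_nonneg hw).2 ?_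
    have hsub : Set.Ioi (0:ℝ) ⊆ Function.support w := fun x hx => by
      have : 0 < w x :=
        div_pos (Real.exp_pos _) (Real.rpow_pos_of_pos (abs_pos.2 (ne_of_gt hx)) _)
      exact this.ne'
    refine lt_of_lt_of_le ?_ (measure_mono hsub)
    rw [Real.volume_Ioi]
    exact ENNReal.zero_lt_top
  constructor
  · refine Tendsto.congr' ?_ main
    filter_upwards [eventually_gt_atTop (0:ℝ)] with t ht
    exact (key t ht).symm
  · exact mul_ne_zero hlam0 hwpos.ne'
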